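/- arXiv:1912.08512 — 8 statements merged into one kernel-verified Lean document; each statement's English description precedes it below -/
import Mathlib

section
/- For all (ρ₁,ρ₂) ∈ [-1,1]², one has (1-ρ₁)(1-ρ₁ρ₂)(1-ρ₂) ≤ 2, and the value 2 is attained at (ρ₁,ρ₂) = (0,-1). -/
theorem stmt_1 :
    (∀ ρ₁ ρ₂ : ℝ, ρ₁ ∈ Set.Icc (-1 : ℝ) 1 → ρ₂ ∈ Set.Icc (-1 : ℝ) 1 →
      (1 - ρ₁) * (1 - ρ₁ * ρ₂) * (1 - ρ₂) ≤ 2) ∧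
    (1 - (0 : ℝ)) * (1 - 0 * (-1)) * (1 - (-1)) = 2 := by
  constructor
  · rintro a b ⟨ha1, ha2⟩ ⟨hb1, hb2⟩
    nlinarith [mul_nonneg (sub_nonneg.2 ha2) (sub_nonneg.2 hb2),
      mul_nonneg (by linarith : (0:ℝ) ≤ 1+a) (by linarith : (0:ℝ) ≤ 1-b),
      mul_nonneg (by linarith : (0:ℝ) ≤ 1-a) (by linarith : (0:ℝ) ≤ 1+b),
      mul_nonneg (by linarith : (0:ℝ) ≤ 1+a) (by linarith : (0:ℝ) ≤ 1+b),
      sq_nonneg (a+b), sq_nonneg (a-b), sq_nonneg (a*b), sq_nonneg (a*b-1), sq_nonneg (a*b+1),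
      mul_nonneg (mul_nonneg (sub_nonneg.2 ha2) (sub_nonneg.2 hb2)) (sub_nonneg.2 hb2),
      mul_nonneg (mul_nonneg (sub_nonneg.2 ha2) (sub_nonneg.2 hb2)) (sub_nonneg.2 ha2)]
  · norm_num
end

section
/- For all (ρ₁,ρ₂,ρ₃) ∈ [-1,1]³, one has (1-ρ₁)(1-ρ₁ρ₂)(1-ρ₁ρ₂ρ₃)(1-ρ₂)(1-ρ₂ρ₃)(1-ρ₃) ≤ 4, and the value 4 is attained at (ρ₁,ρ₂,ρ₃) = (-1,0,-1). -/
lemma key_pohst4 (b t w : ℝ) (hb1 : -1 ≤ b) (hb2 : b ≤ 1) (hw1 : 0 ≤ w) (hw2 : w ≤ 1)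
    (ht1 : -w ≤ t) (ht2 : t ≤ w) : (1-t)*(1-b*t)*(1-b*w) ≤ 2 := by
  have hwt : (0:ℝ) ≤ w + t := by linarith
  have hwt' : (0:ℝ) ≤ w - t := by linarith
  have ht1' : -1 ≤ t := by linarith
  have ht2' : t ≤ 1 := by linarith
  have hC : 0 ≤ 1 - b*w := by nlinarith
  have hA : 0 ≤ 1 - t := by linarith
  rcases le_or_gt 0 b with h | h
  · have e1 : (1-b*t)*(1-b*w) ≤ 1 := by
      nlinarith [mul_nonneg (mul_nonneg h hwt) hC, sq_nonneg (b*w)]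
    have := mul_le_mul_of_nonneg_left e1 hA
    nlinarith
  · rcases le_or_gt 0 (2*b*w + (1+b)) with h2 | h2
    · have e1 : (1-t)*(1-b*t) ≤ (1+w)*(1+b*w) := by
        nlinarith [mul_nonneg hwt (mul_nonneg (neg_nonneg.2 h.le) hwt)]
      have e2 : (1+w)*(1+b*w)*(1-b*w) ≤ 2 := by
        nlinarith [mul_nonneg hw1 (sq_nonneg (b*w)), sq_nonneg (b*w)]
      have := mul_le_mul_of_nonneg_right e1 hC
      nlinarith
    · have e1 : (-4*b)*((1-t)*(1-b*t)) ≤ (1-b)^2 := by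
        nlinarith [sq_nonneg (2*b*t - (1+b))]
      have hb3 : 3*(-b) ≥ 1 := by nlinarith [mul_nonneg (neg_nonneg.2 h.le) (sub_nonneg.2 hw2)]
      have e2 : (1-b)^2*(1-b*w) ≤ -8*b := by
        nlinarith [mul_nonneg (sub_nonneg.2 hb2) (by nlinarith : (0:ℝ) ≤ b^2 - 4*b - 1),
          mul_nonneg (mul_nonneg (neg_nonneg.2 h.le) (sub_nonneg.2 hw2)) (sq_nonneg (1-b))]
      have := mul_le_mul_of_nonneg_right e1 hC
      nlinarith [mul_pos (neg_pos.2 h) (neg_pos.2 h)]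

lemma one_sub_mul_nonneg (x y : ℝ) (hx1 : -1 ≤ x) (hx2 : x ≤ 1) (hy1 : -1 ≤ y)
    (hy2 : y ≤ 1) : 0 ≤ 1 - x*y := by nlinarith

set_option maxHeartbeats 2000000 in
theorem stmt_2 :
    (∀ ρ₁ ρ₂ ρ₃ : ℝ, ρ₁ ∈ Set.Icc (-1 : ℝ) 1 → ρ₂ ∈ Set.Icc (-1 : ℝ) 1 →
      ρ₃ ∈ Set.Icc (-1 : ℝ) 1 →
      (1 - ρ₁) * (1 - ρ₁ * ρ₂) * (1 - ρ₁ * ρ₂ * ρ₃) * (1 - ρ₂) * (1 - ρ₂ * ρ₃) * (1 - ρ₃) ≤ 4) ∧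
    (1 - (-1 : ℝ)) * (1 - (-1) * 0) * (1 - (-1) * 0 * (-1)) * (1 - 0) * (1 - 0 * (-1)) * (1 - (-1)) = 4 := by
  constructor
  · rintro a b c ⟨ha1, ha2⟩ ⟨hb1, hb2⟩ ⟨hc1, hc2⟩
    have hac1 : 0 ≤ (1-a)*(1-c) := mul_nonneg (by linarith) (by linarith)
    have hac2 : 0 ≤ (1+a)*(1+c) := mul_nonneg (by linarith) (by linarith)
    have hw1 : 0 ≤ (1 + a*c)/2 := by nlinarith
    have hw2 : (1 + a*c)/2 ≤ 1 := by nlinarith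
    have ht1 : -((1 + a*c)/2) ≤ (a + c)/2 := by nlinarith
    have ht2 : (a + c)/2 ≤ (1 + a*c)/2 := by nlinarith
    have hg := key_pohst4 b ((a + c)/2) ((1 + a*c)/2) hb1 hb2 hw1 hw2 ht1 ht2
    have f1 : (0:ℝ) ≤ 1 - (a + c)/2 := by nlinarith
    have f2 : (0:ℝ) ≤ 1 - b*((a + c)/2) := by
      nlinarith [mul_nonneg (mul_nonneg (by linarith : (0:ℝ) ≤ 1+b) (by linarith : (0:ℝ) ≤ 1+a)) (by linarith : (0:ℝ) ≤ 1+c), mul_nonneg (mul_nonneg (by linarith : (0:ℝ) ≤ 1-b) (by linarith : (0:ℝ) ≤ 1-a)) (by linarith : (0:ℝ) ≤ 1-c), mul_nonneg (mul_nonneg (by linarith : (0:ℝ) ≤ 1+b) (by linarith : (0:ℝ) ≤ 1-a)) (by linarith : (0:ℝ) ≤ 1-c), mul_nonneg (mul_nonneg (by linarith : (0:ℝ) ≤ 1-b) (by linarith : (0:ℝ) ≤ 1+a)) (by linarith : (0:ℝ) ≤ 1+c)]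
    have f3 : (0:ℝ) ≤ 1 - b*((1 + a*c)/2) := by
      nlinarith [mul_nonneg (by linarith : (0:ℝ) ≤ 1-b) hw1, mul_nonneg (by linarith : (0:ℝ) ≤ 1+b) hw1]
    have p1 : (1-a)*(1-c) ≤ (1 - (a + c)/2)^2 := by nlinarith [sq_nonneg (a-c)]
    have p2 : (1-a*b)*(1-b*c) ≤ (1 - b*((a + c)/2))^2 := by nlinarith [sq_nonneg (b*(a-c))]
    have p3 : (1-b)*(1-a*b*c) ≤ (1 - b*((1 + a*c)/2))^2 := by nlinarith [sq_nonneg (b*(1-a*c))]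
    have hab : 0 ≤ 1 - a*b := one_sub_mul_nonneg a b ha1 ha2 hb1 hb2
    have hbc : 0 ≤ 1 - b*c := one_sub_mul_nonneg b c hb1 hb2 hc1 hc2
    have hab' : 0 ≤ 1 + a*b := by
      have h := one_sub_mul_nonneg a (-b) ha1 ha2 (by linarith) (by linarith)
      have : a*(-b) = -(a*b) := by ring
      linarith
    have habc : 0 ≤ 1 - a*b*c := one_sub_mul_nonneg (a*b) c (by linarith) (by linarith) hc1 hc2
    have q1 : 0 ≤ (1-a*b)*(1-b*c) := mul_nonneg hab hbc
    have q2 : 0 ≤ (1-b)*(1-a*b*c) := mul_nonneg (by linarith) habc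
    have key1 : (1-a)*(1-c) * ((1-a*b)*(1-b*c)) * ((1-b)*(1-a*b*c)) ≤
        (1 - (a + c)/2)^2 * (1 - b*((a + c)/2))^2 * (1 - b*((1 + a*c)/2))^2 := by
      have s1 : (1-a)*(1-c) * ((1-a*b)*(1-b*c)) ≤ (1 - (a + c)/2)^2 * (1 - b*((a + c)/2))^2 :=
        mul_le_mul p1 p2 q1 (sq_nonneg _)
      exact mul_le_mul s1 p3 q2 (mul_nonneg (sq_nonneg _) (sq_nonneg _))
    have gnn : 0 ≤ (1 - (a + c)/2) * (1 - b*((a + c)/2)) * (1 - b*((1 + a*c)/2)) :=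
      mul_nonneg (mul_nonneg f1 f2) f3
    have h4 : ((1 - (a + c)/2) * (1 - b*((a + c)/2)) * (1 - b*((1 + a*c)/2))) *
        ((1 - (a + c)/2) * (1 - b*((a + c)/2)) * (1 - b*((1 + a*c)/2))) ≤ 2*2 :=
      mul_le_mul hg hg gnn (by norm_num)
    calc (1 - a) * (1 - a * b) * (1 - a * b * c) * (1 - b) * (1 - b * c) * (1 - c)
        = (1-a)*(1-c) * ((1-a*b)*(1-b*c)) * ((1-b)*(1-a*b*c)) := by ring
      _ ≤ (1 - (a + c)/2)^2 * (1 - b*((a + c)/2))^2 * (1 - b*((1 + a*c)/2))^2 := key1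
      _ = ((1 - (a + c)/2) * (1 - b*((a + c)/2)) * (1 - b*((1 + a*c)/2))) *
          ((1 - (a + c)/2) * (1 - b*((a + c)/2)) * (1 - b*((1 + a*c)/2))) := by ring
      _ ≤ 4 := by linarith
  · norm_num
end

section
/- For all (x,g) ∈ [-1,1]², one has (1 - 2xg + x²)·2√(1-g²) ≤ 3^{3/2}, with equality at (x,g) = (1,-1/2). -/
lemma rpow32 : (3 : ℝ) ^ ((3 : ℝ) / 2) = Real.sqrt 27 := by
  rw [show (27:ℝ) = 3 ^ (3:ℕ) by norm_num, Real.sqrt_eq_rpow, ← Real.rpow_natCast 3 3,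
    ← Real.rpow_mul (by norm_num)]
  norm_num

lemma key (x g : ℝ) (hx1 : -1 ≤ x) (hx2 : x ≤ 1) (hg1 : -1 ≤ g) (hg2 : g ≤ 1) :
    (1 - 2 * x * g + x ^ 2) ^ 2 * (1 - g ^ 2) * 4 ≤ 27 := by
  have hg : (0:ℝ) ≤ 1 - g ^ 2 := by nlinarith
  have hA : (0:ℝ) ≤ 1 - 2 * x * g + x ^ 2 := by nlinarith [sq_nonneg (x - g)]
  rcases le_or_gt g 0 with h | h
  · have hA2 : 1 - 2 * x * g + x ^ 2 ≤ 2 - 2 * g := by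
      nlinarith [mul_nonneg (sub_nonneg.2 hx2) (by linarith : (0:ℝ) ≤ x + 1 - 2 * g)]
    have h1 : (1 - 2 * x * g + x ^ 2) ^ 2 * (1 - g ^ 2) ≤ (2 - 2 * g) ^ 2 * (1 - g ^ 2) :=
      mul_le_mul_of_nonneg_right (pow_le_pow_left₀ hA hA2 2) hg
    nlinarith [sq_nonneg ((2 * g + 1) * (2 * g - 3)), sq_nonneg (2 * g + 1)]
  · have hA2 : 1 - 2 * x * g + x ^ 2 ≤ 2 + 2 * g := by
      nlinarith [mul_nonneg (by linarith : (0:ℝ) ≤ x + 1) (by linarith : (0:ℝ) ≤ 1 + 2 * g - x)]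
    have h1 : (1 - 2 * x * g + x ^ 2) ^ 2 * (1 - g ^ 2) ≤ (2 + 2 * g) ^ 2 * (1 - g ^ 2) :=
      mul_le_mul_of_nonneg_right (pow_le_pow_left₀ hA hA2 2) hg
    nlinarith [sq_nonneg ((2 * g - 1) * (2 * g + 3)), sq_nonneg (2 * g - 1)]

theorem stmt_6 :
    (∀ x g : ℝ, x ∈ Set.Icc (-1 : ℝ) 1 → g ∈ Set.Icc (-1 : ℝ) 1 →
      (1 - 2 * x * g + x ^ 2) * (2 * Real.sqrt (1 - g ^ 2)) ≤ (3 : ℝ) ^ ((3 : ℝ) / 2)) ∧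
    (1 - 2 * 1 * (-1 / 2) + (1 : ℝ) ^ 2) * (2 * Real.sqrt (1 - (-1 / 2 : ℝ) ^ 2))
      = (3 : ℝ) ^ ((3 : ℝ) / 2) := by
  constructor
  · rintro x g ⟨hx1, hx2⟩ ⟨hg1, hg2⟩
    rw [rpow32]
    have hg : (0:ℝ) ≤ 1 - g ^ 2 := by nlinarith
    have hA : (0:ℝ) ≤ 1 - 2 * x * g + x ^ 2 := by nlinarith [sq_nonneg (x - g)]
    have hs : 0 ≤ Real.sqrt (1 - g ^ 2) := Real.sqrt_nonneg _
    rw [Real.le_sqrt (by positivity) (by norm_num)]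
    have hsq : Real.sqrt (1 - g ^ 2) ^ 2 = 1 - g ^ 2 := Real.sq_sqrt hg
    have := key x g hx1 hx2 hg1 hg2
    nlinarith [sq_nonneg (1 - 2*x*g + x^2)]
  · have h1 : (1 - (-1 / 2 : ℝ) ^ 2) = 3 / 4 := by norm_num
    rw [h1, rpow32, show (27:ℝ) = 3^2 * (3/4) * 2^2 by norm_num, Real.sqrt_mul (by positivity),
      Real.sqrt_mul (by positivity), Real.sqrt_sq (by norm_num : (0:ℝ) ≤ 3),
      Real.sqrt_sq (by norm_num : (0:ℝ) ≤ 2)]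
    ring
end

section
/- For all (x,y,g) ∈ [-1,1]³, one has (1-x)(1 - 2xyg + (xy)²)(1 - 2yg + y²)·2√(1-g²) ≤ 16, with equality at (x,y,g) = (-1,1,0). -/
set_option maxHeartbeats 1000000 in

private lemma aux_ypos (x y g s : ℝ) (hx1 : -1 ≤ x) (hx2 : x ≤ 1) (hy1 : 0 ≤ y) (hy2 : y ≤ 1)
    (hg1 : -1 ≤ g) (hg2 : g ≤ 1) (hs : 0 ≤ s) (hs1 : s ≤ 1) (hs2 : s^2 = 1 - g^2) :
    (1 - x) * (1 - 2 * (x * y) * g + (x * y) ^ 2) * (1 - 2 * y * g + y ^ 2) * (2 * s) ≤ 16 := by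
  have hy2' : y^2 ≤ 1 := by nlinarith
  have hg2' : g^2 ≤ 1 := by nlinarith
  have hA0 : 0 ≤ 1 - 2 * (x * y) * g + (x * y) ^ 2 := by nlinarith [sq_nonneg (x*y - g)]
  have hB0 : 0 ≤ 1 - 2 * y * g + y ^ 2 := by nlinarith [sq_nonneg (y - g)]
  have hP0 : 0 ≤ 1 + 2 * y * g + y ^ 2 := by nlinarith [sq_nonneg (y + g)]
  rcases le_or_gt 0 x with hx0 | hx0
  · -- Case 1 : 0 ≤ x
    have hA : 1 - 2 * (x * y) * g + (x * y) ^ 2 ≤ (1+x)^2 := by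
      nlinarith [mul_nonneg hx0 (sq_nonneg (y+g)), mul_nonneg hx0 (by linarith : (0:ℝ) ≤ 2 - y^2 - g^2), mul_nonneg (sq_nonneg x) (by linarith : (0:ℝ) ≤ 1 - y^2)]
    have hB : 1 - 2 * y * g + y ^ 2 ≤ 4 := by nlinarith [sq_nonneg (y+g)]
    have hx3 : (0:ℝ) ≤ (1-x)*(1+x)^2 := by nlinarith [sq_nonneg (1+x)]
    have hcub : (1-x)*(1+x)^2 ≤ 2 := by nlinarith [sq_nonneg x, mul_nonneg (mul_nonneg hx0 hx0) hx0]
    calc (1 - x) * (1 - 2 * (x * y) * g + (x * y) ^ 2) * (1 - 2 * y * g + y ^ 2) * (2 * s)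
        ≤ ((1-x)*(1+x)^2) * 4 * (2*1) := by
          apply mul_le_mul _ (by linarith) (by linarith) (by positivity)
          apply mul_le_mul _ hB hB0 hx3
          exact mul_le_mul_of_nonneg_left hA (by linarith)
      _ ≤ 16 := by nlinarith
  · rcases le_or_gt (-(1/2)) g with hgh | hgh
    · -- Case 2/3a : x < 0, g ≥ -1/2
      have key : (1 - x) * (1 - 2 * (x * y) * g + (x * y) ^ 2) ≤ 2*(1 + 2*y*g + y^2) := by
        have h1 : (0:ℝ) ≤ 1 - 2*y + 2*y^2 + x*y - 2*x*y^2 + x^2*y^2 := by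
          nlinarith [sq_nonneg (2*x*y - (1-2*y)), sq_nonneg (1-2*y), mul_nonneg (mul_nonneg (by linarith : (0:ℝ) ≤ -x) hy1) (by linarith : (0:ℝ) ≤ 1 - y), sq_nonneg (x*y), sq_nonneg (1-y)]
        have h2 : (0:ℝ) ≤ (4 - 2*x)*y*(1/2 + g) :=
          mul_nonneg (mul_nonneg (by linarith : (0:ℝ) ≤ 4 - 2*x) hy1) (by linarith)
        have h3 : (0:ℝ) ≤ 1 + x := by linarith
        nlinarith [mul_nonneg h3 (add_nonneg h1 h2)]
      have h2 : (1 - x) * (1 - 2 * (x * y) * g + (x * y) ^ 2) * (1 - 2 * y * g + y ^ 2) ≤ 2*(1 + 2*y*g + y^2) * (1 - 2*y*g + y^2) :=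
        mul_le_mul_of_nonneg_right key hB0
      have h3 : 2*(1 + 2*y*g + y^2) * (1 - 2*y*g + y^2) ≤ 8 := by
        nlinarith [sq_nonneg (y*g), sq_nonneg (1 - y^2)]
      have h4 : (0:ℝ) ≤ 2*(1 + 2*y*g + y^2) * (1 - 2*y*g + y^2) := by
        have := mul_nonneg hP0 hB0; nlinarith [this]
      nlinarith [mul_le_mul h2 (by linarith : 2*s ≤ 2) (by linarith) h4]
    · -- Case 3b : x < 0, g < -1/2
      have hA1 : 1 - 2 * (x * y) * g + (x * y) ^ 2 ≤ 1 := by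
        have ht : 0 ≤ -(x*y) := by nlinarith
        have ht1 : -(x*y) ≤ 1 := by nlinarith
        nlinarith [mul_nonneg ht (by linarith : (0:ℝ) ≤ -(1/2) - g), mul_nonneg ht (by linarith : (0:ℝ) ≤ 1 - (-(x*y)))]
      have hB1 : 1 - 2 * y * g + y ^ 2 ≤ 2 - 2*g := by
        nlinarith [mul_nonneg (by linarith : (0:ℝ) ≤ -g) (by linarith : (0:ℝ) ≤ 1 - y)]
      have hsg : s * (1 - g) ≤ 2 := by
        have hnn : 0 ≤ s * (1-g) := mul_nonneg hs (by linarith)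
        have hsq : (s*(1-g))^2 ≤ 4 := by
          have : (s*(1-g))^2 = (1+g)*(1-g)^3 := by rw [mul_pow]; rw [hs2]; ring
          rw [this]
          nlinarith [sq_nonneg (1+2*g), sq_nonneg g, sq_nonneg (1-g), mul_nonneg (by linarith : (0:ℝ) ≤ 1+g) (sq_nonneg (1+2*g))]
        nlinarith [hnn, hsq]
      calc (1 - x) * (1 - 2 * (x * y) * g + (x * y) ^ 2) * (1 - 2 * y * g + y ^ 2) * (2 * s)
          ≤ 2 * 1 * (2 - 2*g) * (2 * s) := by
            apply mul_le_mul_of_nonneg_right _ (by positivity)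
            apply mul_le_mul _ hB1 hB0 (by nlinarith)
            apply mul_le_mul (by linarith) hA1 hA0 (by norm_num)
        _ = 8 * (s * (1-g)) := by ring
        _ ≤ 16 := by linarith

theorem stmt_8 :
    (∀ x y g : ℝ, x ∈ Set.Icc (-1 : ℝ) 1 → y ∈ Set.Icc (-1 : ℝ) 1 → g ∈ Set.Icc (-1 : ℝ) 1 →
      (1 - x) * (1 - 2 * (x * y) * g + (x * y) ^ 2) * (1 - 2 * y * g + y ^ 2) *
        (2 * Real.sqrt (1 - g ^ 2)) ≤ 16) ∧
    (1 - (-1 : ℝ)) * (1 - 2 * ((-1) * 1) * 0 + ((-1 : ℝ) * 1) ^ 2) * (1 - 2 * 1 * 0 + (1 : ℝ) ^ 2) *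
      (2 * Real.sqrt (1 - (0 : ℝ) ^ 2)) = 16 := by
  constructor
  · rintro x y g ⟨hx1, hx2⟩ ⟨hy1, hy2⟩ ⟨hg1, hg2⟩
    set s := Real.sqrt (1 - g ^ 2) with hsdef
    have hgs : g^2 ≤ 1 := by nlinarith
    have hs : 0 ≤ s := Real.sqrt_nonneg _
    have hs2 : s^2 = 1 - g^2 := Real.sq_sqrt (by linarith)
    have hs1 : s ≤ 1 := by
      nlinarith [sq_nonneg (s-1)]
    rcases le_or_gt 0 y with hy0 | hy0
    · exact aux_ypos x y g s hx1 hx2 hy0 hy2 hg1 hg2 hs hs1 hs2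
    · have h := aux_ypos x (-y) (-g) s hx1 hx2 (by linarith) (by linarith) (by linarith)
        (by linarith) hs hs1 (by nlinarith)
      refine le_trans (le_of_eq (by ring)) h
  · rw [show (1:ℝ) - (0:ℝ)^2 = 1 by norm_num, Real.sqrt_one]
    norm_num
end

section
/- For all (x,g,h) ∈ [-1,1]³, one has 4√(1-g²)√(1-h²)·((1+x²)² - 4x(1+x²)gh + 4x²(-1+g²+h²)) ≤ 16, with equality at (x,g,h) = (1, 1/√2, -1/√2). -/
lemma key2 (u s : ℝ) (hu0 : 0 ≤ u) (hu1 : u ≤ 1) (hs0 : 0 ≤ s) (hs2 : s ≤ 2) :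
    (2 - s) * (2*(1 + u^2)^2 + 4*u*(1+u^2)*s + 8*u^2*(s-1)) ≤ 16 := by
  nlinarith [sq_nonneg (s-1), sq_nonneg (u-1), mul_nonneg hs0 (sub_nonneg.2 hs2), mul_nonneg hu0 (sub_nonneg.2 hu1), sq_nonneg (u*s-1), sq_nonneg (u+s-2), mul_nonneg (mul_nonneg hu0 hu0) (sub_nonneg.2 hu1), sq_nonneg (s*(1-u)), mul_nonneg (mul_nonneg hu0 hs0) (sub_nonneg.2 hs2), mul_nonneg (mul_nonneg hu0 hu0) (mul_nonneg hs0 (sub_nonneg.2 hs2))]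

lemma key3 (x g h : ℝ) (hx : x^2 ≤ 1) (hg : g^2 ≤ 1) (hh : h^2 ≤ 1) :
    2 * (2 - g^2 - h^2) * ((1 + x ^ 2) ^ 2 - 4 * x * (1 + x ^ 2) * g * h + 4 * x ^ 2 * (-1 + g ^ 2 + h ^ 2)) ≤ 16 := by
  have hs0 : (0:ℝ) ≤ g^2 + h^2 := by positivity
  have hs2 : g^2 + h^2 ≤ 2 := by linarith
  rcases le_total 0 x with hx0 | hx0
  · have hk := key2 x (g^2 + h^2) hx0 (by nlinarith) hs0 hs2
    have hprod : 0 ≤ 4 * x * (1 + x^2) * ((2 - (g^2+h^2)) * (g+h)^2) := by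
      apply mul_nonneg (mul_nonneg (by linarith) (by positivity))
      exact mul_nonneg (by linarith) (sq_nonneg _)
    nlinarith [hk, hprod]
  · have hx0' : 0 ≤ -x := by linarith
    have hk := key2 (-x) (g^2 + h^2) hx0' (by nlinarith) hs0 hs2
    have hprod : 0 ≤ 4 * (-x) * (1 + x^2) * ((2 - (g^2+h^2)) * (g-h)^2) := by
      apply mul_nonneg (mul_nonneg (by linarith) (by positivity))
      exact mul_nonneg (by linarith) (sq_nonneg _)
    nlinarith [hk, hprod]

theorem stmt_9 :
    (∀ x g h : ℝ, x ∈ Set.Icc (-1 : ℝ) 1 → g ∈ Set.Icc (-1 : ℝ) 1 → h ∈ Set.Icc (-1 : ℝ) 1 →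
      4 * Real.sqrt (1 - g ^ 2) * Real.sqrt (1 - h ^ 2) *
        ((1 + x ^ 2) ^ 2 - 4 * x * (1 + x ^ 2) * g * h + 4 * x ^ 2 * (-1 + g ^ 2 + h ^ 2)) ≤ 16) ∧
    4 * Real.sqrt (1 - (1 / Real.sqrt 2) ^ 2) * Real.sqrt (1 - (-(1 / Real.sqrt 2)) ^ 2) *
      ((1 + (1 : ℝ) ^ 2) ^ 2 - 4 * 1 * (1 + (1 : ℝ) ^ 2) * (1 / Real.sqrt 2) * (-(1 / Real.sqrt 2))
        + 4 * (1 : ℝ) ^ 2 * (-1 + (1 / Real.sqrt 2) ^ 2 + (-(1 / Real.sqrt 2)) ^ 2)) = 16 := by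
  constructor
  · intro x g h hx hg hh
    obtain ⟨hx1, hx2⟩ := hx
    obtain ⟨hg1, hg2⟩ := hg
    obtain ⟨hh1, hh2⟩ := hh
    have hx' : x^2 ≤ 1 := by nlinarith
    have hg' : g^2 ≤ 1 := by nlinarith
    have hh' : h^2 ≤ 1 := by nlinarith
    set P := (1 + x ^ 2) ^ 2 - 4 * x * (1 + x ^ 2) * g * h + 4 * x ^ 2 * (-1 + g ^ 2 + h ^ 2) with hP
    set a := Real.sqrt (1 - g ^ 2) with ha
    set b := Real.sqrt (1 - h ^ 2) with hb
    have ha0 : 0 ≤ a := Real.sqrt_nonneg _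
    have hb0 : 0 ≤ b := Real.sqrt_nonneg _
    have ha2 : a^2 = 1 - g^2 := Real.sq_sqrt (by linarith)
    have hb2 : b^2 = 1 - h^2 := Real.sq_sqrt (by linarith)
    rcases le_total P 0 with hP0 | hP0
    · have : 4 * a * b * P ≤ 0 :=
        mul_nonpos_of_nonneg_of_nonpos (by positivity) hP0
      linarith
    · have hab : 4 * a * b * P ≤ 2 * (a^2 + b^2) * P := by
        have h1 : 0 ≤ (a - b)^2 * P := mul_nonneg (sq_nonneg _) hP0
        nlinarith [h1]
      have h2 : 2 * (a^2 + b^2) * P = 2 * (2 - g^2 - h^2) * P := by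
        rw [ha2, hb2]; ring
      have h3 := key3 x g h hx' hg' hh'
      rw [← hP] at h3
      linarith
  · have h2 : (0:ℝ) < Real.sqrt 2 := Real.sqrt_pos.2 (by norm_num)
    have hsq : Real.sqrt 2 ^ 2 = 2 := Real.sq_sqrt (by norm_num)
    have hgsq : (1 / Real.sqrt 2) ^ 2 = 1/2 := by
      rw [div_pow, hsq]; norm_num
    have hhsq : (-(1 / Real.sqrt 2)) ^ 2 = 1/2 := by
      rw [neg_pow, hgsq]; norm_num
    rw [hgsq, hhsq]
    have : Real.sqrt (1 - 1/2) = Real.sqrt (1/2) := by norm_num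
    rw [this]
    have hmul : Real.sqrt (1/2) * Real.sqrt (1/2) = 1/2 :=
      Real.mul_self_sqrt (by norm_num)
    have hinv : (1 / Real.sqrt 2) * (1 / Real.sqrt 2) = 1/2 := by
      rw [div_mul_div_comm, Real.mul_self_sqrt (by norm_num : (0:ℝ) ≤ 2)]; norm_num
    nlinarith [hmul, hinv]
end

section
/- Let α₁, α₂, α₃ be real numbers with α₃ = 1 and let (z,g) ∈ (-1,1)² be such that each 1 - 2αⱼzg + αⱼ²z² > 0 and both ∑_{j=1}^{3} (-2αⱼg + 2αⱼ²z)/(1 - 2αⱼzg + αⱼ²z²) = 0 and -g/(1-g²) + ∑_{j=1}^{3} (-2αⱼz)/(1 - 2αⱼzg + αⱼ²z²) = 0 hold. Then g = 0 and z = 0. -/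
theorem stmt_10 (α : Fin 3 → ℝ) (hα3 : α 2 = 1) (z g : ℝ)
    (hz : z ∈ Set.Ioo (-1 : ℝ) 1) (hg : g ∈ Set.Ioo (-1 : ℝ) 1)
    (hpos : ∀ j, 0 < 1 - 2 * α j * z * g + (α j) ^ 2 * z ^ 2)
    (hI : ∑ j, (-2 * α j * g + 2 * (α j) ^ 2 * z) / (1 - 2 * α j * z * g + (α j) ^ 2 * z ^ 2) = 0)
    (hII : -g / (1 - g ^ 2) +
      ∑ j, (-2 * α j * z) / (1 - 2 * α j * z * g + (α j) ^ 2 * z ^ 2) = 0) :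
    g = 0 ∧ z = 0 := by
  obtain ⟨hg1, hg2⟩ := hg
  have hg2pos : 0 < 1 - g ^ 2 := by nlinarith
  have h0 := hpos 0
  have h1 := hpos 1
  have h2 := hpos 2
  rw [hα3] at h2
  rw [Fin.sum_univ_three] at hI hII
  rw [hα3] at hI hII
  have key : g ^ 2 / (1 - g ^ 2)
      + 2 * (α 0) ^ 2 * z ^ 2 / (1 - 2 * α 0 * z * g + (α 0) ^ 2 * z ^ 2)
      + 2 * (α 1) ^ 2 * z ^ 2 / (1 - 2 * α 1 * z * g + (α 1) ^ 2 * z ^ 2)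
      + 2 * 1 ^ 2 * z ^ 2 / (1 - 2 * 1 * z * g + 1 ^ 2 * z ^ 2) = 0 := by
    linear_combination z * hI - g * hII
  have hA : 0 ≤ g ^ 2 / (1 - g ^ 2) := div_nonneg (sq_nonneg g) hg2pos.le
  have hB0 : 0 ≤ 2 * (α 0) ^ 2 * z ^ 2 / (1 - 2 * α 0 * z * g + (α 0) ^ 2 * z ^ 2) :=
    div_nonneg (by positivity) h0.le
  have hB1 : 0 ≤ 2 * (α 1) ^ 2 * z ^ 2 / (1 - 2 * α 1 * z * g + (α 1) ^ 2 * z ^ 2) :=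
    div_nonneg (by positivity) h1.le
  have hB2 : 0 ≤ 2 * 1 ^ 2 * z ^ 2 / (1 - 2 * 1 * z * g + 1 ^ 2 * z ^ 2) :=
    div_nonneg (by positivity) h2.le
  have hgz : g ^ 2 / (1 - g ^ 2) = 0 := le_antisymm (by linarith) hA
  have hzz : 2 * 1 ^ 2 * z ^ 2 / (1 - 2 * 1 * z * g + 1 ^ 2 * z ^ 2) = 0 :=
    le_antisymm (by linarith) hB2
  constructor
  · rcases div_eq_zero_iff.mp hgz with h | h
    · exact pow_eq_zero_iff two_ne_zero |>.mp h
    · exact absurd h (by linarith)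
  · rcases div_eq_zero_iff.mp hzz with h | h
    · nlinarith [sq_nonneg z]
    · exact absurd h (by linarith)
end

section
/- For every g ∈ (-1,1) there exists a unique x ∈ (-1,1) with g = 2x³/(1-3x²) and -4x³ - 6gx² + 2g = 0; i.e., the map x ↦ 2x³/(1-3x²) restricted suitably is a bijection from (-1,1) onto (-1,1) when interpreted through the critical-point equation ∂S/∂x(x,g) = 0 with S(x,g) = (1-x²)(1+2xg+x²). -/
theorem stmt_18 (g : ℝ) (hg : g ∈ Set.Ioo (-1 : ℝ) 1) :
    ∃! x : ℝ, x ∈ Set.Ioo (-1 : ℝ) 1 ∧ -4 * x ^ 3 - 6 * g * x ^ 2 + 2 * g = 0 := by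
  obtain ⟨hg1, hg2⟩ := hg
  -- existence via intermediate value theorem
  have hcont : ContinuousOn (fun x : ℝ => -4 * x ^ 3 - 6 * g * x ^ 2 + 2 * g)
      (Set.Icc (-1 : ℝ) 1) := by fun_prop
  have hsub := intermediate_value_Ioo' (by norm_num : (-1 : ℝ) ≤ 1) hcont
  have h0 : (0 : ℝ) ∈ Set.Ioo ((fun x : ℝ => -4 * x ^ 3 - 6 * g * x ^ 2 + 2 * g) 1)
      ((fun x : ℝ => -4 * x ^ 3 - 6 * g * x ^ 2 + 2 * g) (-1)) := by
    constructor
    · show -4 * (1:ℝ) ^ 3 - 6 * g * (1:ℝ) ^ 2 + 2 * g < 0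
      nlinarith
    · show (0:ℝ) < -4 * (-1:ℝ) ^ 3 - 6 * g * (-1:ℝ) ^ 2 + 2 * g
      nlinarith
  obtain ⟨x, hx, hfx0⟩ := hsub h0
  have hfx : -4 * x ^ 3 - 6 * g * x ^ 2 + 2 * g = 0 := hfx0
  clear hfx0 hsub h0 hcont
  refine ⟨x, ⟨hx, hfx⟩, ?_⟩
  rintro y ⟨hy, hfy⟩
  -- uniqueness
  by_contra hne
  obtain ⟨hy1, hy2⟩ := hy
  obtain ⟨hx1, hx2⟩ := hx
  have hsub' : y - x ≠ 0 := sub_ne_zero.mpr hne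
  -- from difference of the two root equations
  have C1 : 4 * (y ^ 2 + y * x + x ^ 2) + 6 * g * (y + x) = 0 := by
    have h : (y - x) * (4 * (y ^ 2 + y * x + x ^ 2) + 6 * g * (y + x)) = 0 := by
      linear_combination hfx - hfy
    rcases mul_eq_zero.mp h with h | h
    · exact absurd h hsub'
    · exact h
  -- cross-multiplied equation
  have C2 : y ^ 2 + y * x + x ^ 2 - 3 * y ^ 2 * x ^ 2 = 0 := by
    have E1 : g * (1 - 3 * x ^ 2) = 2 * x ^ 3 := by linarith
    have E2 : g * (1 - 3 * y ^ 2) = 2 * y ^ 3 := by linarith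
    have h : (y - x) * (2 * (y ^ 2 + y * x + x ^ 2 - 3 * y ^ 2 * x ^ 2)) = 0 := by
      linear_combination (1 - 3 * y ^ 2) * E1 - (1 - 3 * x ^ 2) * E2
    rcases mul_eq_zero.mp h with h | h
    · exact absurd h hsub'
    · linarith
  set p := y + x with hp
  set q := y * x with hq
  have hq1 : p ^ 2 = q + 3 * q ^ 2 := by
    rw [hp, hq]; linear_combination C2
  have hgp : g * p = -2 * q ^ 2 := by
    rw [hp, hq]; linear_combination (1/6 : ℝ) * C1 - (2/3 : ℝ) * C2
  have hd : p ^ 2 - 4 * q > 0 := by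
    have h : p ^ 2 - 4 * q = (y - x) ^ 2 := by rw [hp, hq]; ring
    rw [h]
    positivity
  have hqlt1 : q < 1 := by
    rw [hq]; nlinarith [mul_pos (by linarith : (0:ℝ) < 1 - y) (by linarith : (0:ℝ) < 1 - x),
      mul_pos (by linarith : (0:ℝ) < 1 + y) (by linarith : (0:ℝ) < 1 + x)]
  clear hfx hfy C1 C2 hne hsub' hy1 hy2 hx1 hx2
  have hqneg : q < 0 := by nlinarith [hd, hq1]
  have hpne : p ≠ 0 := by
    intro h
    rw [h, mul_zero] at hgp
    nlinarith
  have hpsq : p ^ 2 > 0 := by positivity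
  have hg2' : g ^ 2 < 1 := by nlinarith
  have hgsq : g ^ 2 * p ^ 2 = 4 * q ^ 4 := by linear_combination (g * p - 2 * q ^ 2) * hgp
  have hkey : 4 * q ^ 4 < p ^ 2 := by
    have h := mul_lt_mul_of_pos_right hg2' hpsq
    rw [one_mul] at h
    linarith [hgsq, h]
  have hfin : q * (q - 1) * (2 * q + 1) ^ 2 ≥ 0 := by
    have h1 : q * (q - 1) > 0 := mul_pos_of_neg_of_neg hqneg (by linarith)
    positivity
  nlinarith [hkey, hq1, hfin]
end

section
/- For all (r,g) ∈ [0,1] × [-1,1], one has (1 - 2rg + r²)·2√(1-g²) ≤ 3^{3/2}, with equality at (r,g) = (1,-1/2). -/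
theorem stmt_19 :
    (∀ r g : ℝ, r ∈ Set.Icc (0 : ℝ) 1 → g ∈ Set.Icc (-1 : ℝ) 1 →
      (1 - 2 * r * g + r ^ 2) * (2 * Real.sqrt (1 - g ^ 2)) ≤ (3 : ℝ) ^ ((3 : ℝ) / 2)) ∧
    (1 - 2 * 1 * (-1 / 2) + (1 : ℝ) ^ 2) * (2 * Real.sqrt (1 - (-1 / 2 : ℝ) ^ 2))
      = (3 : ℝ) ^ ((3 : ℝ) / 2) := by
  have h27 : (3 : ℝ) ^ ((3 : ℝ) / 2) = Real.sqrt 27 := by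
    rw [Real.sqrt_eq_rpow, show (27:ℝ) = 3 ^ (3:ℕ) by norm_num,
      ← Real.rpow_natCast 3 3, ← Real.rpow_mul (by norm_num)]
    norm_num
  constructor
  · intro r g ⟨hr0, hr1⟩ ⟨hg0, hg1⟩
    rw [h27]
    have h1g : (0:ℝ) ≤ 1 - g ^ 2 := by nlinarith
    have hs := Real.sq_sqrt h1g
    have hsnn := Real.sqrt_nonneg (1 - g ^ 2)
    set s := Real.sqrt (1 - g ^ 2) with hsdef
    have hA : (0:ℝ) ≤ 1 - 2 * r * g + r ^ 2 := by nlinarith [sq_nonneg (r - g)]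
    have hsq27 : Real.sqrt 27 ^ 2 = 27 := Real.sq_sqrt (by norm_num)
    have key : ((1 - 2 * r * g + r ^ 2) * (2 * s)) ^ 2 ≤ 27 := by
      have : ((1 - 2 * r * g + r ^ 2) * (2 * s)) ^ 2
          = 4 * (1 - 2 * r * g + r ^ 2) ^ 2 * (1 - g ^ 2) := by
        rw [mul_pow, mul_pow]; rw [hs]; ring
      rw [this]
      rcases le_or_gt g (1/2) with hg | hg
      · have hAle : 1 - 2 * r * g + r ^ 2 ≤ 2 * (1 - g) := by nlinarith
        nlinarith [sq_nonneg (g + 1/2), sq_nonneg (g - 3/2),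
          mul_nonneg (sq_nonneg (g + 1/2)) (sq_nonneg (g - 3/2)),
          mul_nonneg hA (sub_nonneg.2 hAle), sq_nonneg (1 - g)]
      · have hAle : 1 - 2 * r * g + r ^ 2 ≤ 1 := by nlinarith
        nlinarith [mul_nonneg hA (sub_nonneg.2 hAle)]
    have hP : 0 ≤ (1 - 2 * r * g + r ^ 2) * (2 * s) := by positivity
    nlinarith [Real.sqrt_nonneg (27:ℝ), hsq27, key, sq_nonneg ((1 - 2 * r * g + r ^ 2) * (2 * s) - Real.sqrt 27)]
  · rw [h27]
    have : Real.sqrt 27 = 6 * Real.sqrt (3/4) := by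
      rw [show (27:ℝ) = 6 ^ 2 * (3/4) by norm_num, Real.sqrt_mul (by positivity),
        Real.sqrt_sq (by norm_num)]
    rw [this]
    norm_num
    ring
end
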